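/- arXiv:1307.7370 — 7 statements merged into one kernel-verified Lean document; each statement's English description precedes it below -/
import Mathlib

section
/- The exponential generating function of the sequence E_{n,a} satisfies ∑_{n≥0} E_{n,a} t^n/n! = 1/((a/2)(e^t + e^{-t}) + 1 - a). -/
open Finset

noncomputable def E (a : ℝ) : ℕ → ℝ
  | 0 => 1
  | n + 1 =>
      -a * ∑ k ∈ (Finset.Icc 1 ((n + 1) / 2)).attach,
        ((n + 1).choose (2 * k.1) : ℝ) * E a (n + 1 - 2 * k.1)
  decreasing_by
    have h := Finset.mem_Icc.mp k.2
    omega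

noncomputable def EP (a : ℝ) (n : ℕ) (x : ℝ) : ℝ :=
  ∑ k ∈ Finset.range (n + 1), (n.choose k : ℝ) * E a k * x ^ (n - k)

lemma E_rec (a : ℝ) (n : ℕ) :
    E a (n + 1) = -a * ∑ j ∈ Finset.Icc 1 ((n + 1) / 2),
      ((n + 1).choose (2 * j) : ℝ) * E a (n + 1 - 2 * j) := by
  rw [E]
  congr 1
  exact Finset.sum_attach (Finset.Icc 1 ((n+1)/2)) (fun j => ((n + 1).choose (2 * j) : ℝ) * E a (n + 1 - 2 * j))

lemma E_rec' (a : ℝ) (n : ℕ) (hn : 1 ≤ n) :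
    E a n = -a * ∑ i ∈ Finset.range (n / 2),
      ((n).choose (2 * (1 + i)) : ℝ) * E a (n - 2 * (1 + i)) := by
  obtain ⟨m, rfl⟩ := Nat.exists_eq_add_of_le hn
  rw [add_comm 1 m, E_rec]
  congr 1
  rw [show Finset.Icc 1 ((m + 1) / 2) = Finset.Ico 1 ((m + 1) / 2 + 1) by rfl,
    Finset.sum_Ico_eq_sum_range]
  simp

lemma fact_ne (k : ℕ) : ((k.factorial : ℝ)) ≠ 0 := by
  exact_mod_cast Nat.factorial_ne_zero k

lemma E_div_fact (a : ℝ) (n : ℕ) (hn : 1 ≤ n) :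
    E a n / n.factorial = -a * ∑ i ∈ Finset.range (n / 2),
      E a (n - 2 * (1 + i)) /
        ((2 * (1 + i)).factorial * (n - 2 * (1 + i)).factorial) := by
  rw [E_rec' a n hn, neg_mul, neg_mul, neg_div, neg_inj, mul_div_assoc]
  congr 1
  rw [Finset.sum_div]
  refine Finset.sum_congr rfl fun i hi => ?_
  have hle : 2 * (1 + i) ≤ n := by
    have := Finset.mem_range.mp hi
    omega
  rw [Nat.cast_choose ℝ hle]
  field_simp

lemma hg (a : ℝ) (m : ℕ) :
    (PowerSeries.coeff m) (PowerSeries.C (a / 2) *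
          (PowerSeries.exp ℝ + PowerSeries.rescale (-1) (PowerSeries.exp ℝ)) +
        PowerSeries.C (1 - a)) =
      (if Even m then a / m.factorial else 0) + (if m = 0 then 1 - a else 0) := by
  rw [map_add, PowerSeries.coeff_C_mul, map_add, PowerSeries.coeff_rescale,
    PowerSeries.coeff_exp, PowerSeries.coeff_C]
  rcases Nat.even_or_odd m with h | h
  · rw [h.neg_one_pow, if_pos h]
    simp [eq_div_iff (fact_ne m)]
    field_simp
    ring
  · rw [h.neg_one_pow, if_neg (Nat.not_even_iff_odd.mpr h)]
    have : m ≠ 0 := by rintro rfl; exact (Nat.not_even_iff_odd.mpr h) Even.zero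
    simp [this, Nat.not_even_iff_odd.mpr h]

theorem stmt0 (a : ℝ) :
    (PowerSeries.mk fun n => E a n / n.factorial) *
      (PowerSeries.C (a / 2) *
          (PowerSeries.exp ℝ + PowerSeries.rescale (-1) (PowerSeries.exp ℝ)) +
        PowerSeries.C (1 - a)) = 1 := by
  ext n
  rw [PowerSeries.coeff_mul, PowerSeries.coeff_one,
    Finset.Nat.sum_antidiagonal_eq_sum_range_succ_mk]
  simp only [PowerSeries.coeff_mk, hg]
  rcases Nat.eq_zero_or_pos n with rfl | hn
  · simp [E]
  · rw [if_neg hn.ne']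
    simp only [mul_add]
    rw [Finset.sum_add_distrib]
    have hS2 : ∑ k ∈ Finset.range (n + 1),
        E a k / k.factorial * (if n - k = 0 then 1 - a else 0) =
        E a n / n.factorial * (1 - a) := by
      rw [Finset.sum_eq_single n]
      · simp
      · intro b hb hbn
        have : n - b ≠ 0 := by
          have := Finset.mem_range.mp hb; omega
        rw [if_neg this, mul_zero]
      · intro h; exact absurd (Finset.self_mem_range_succ n) h
    have hS1 : ∑ k ∈ Finset.range (n + 1),
        E a k / k.factorial * (if Even (n - k) then a / (n - k).factorial else 0) =
        ∑ j ∈ Finset.range (n / 2 + 1),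
          E a (n - 2 * j) / (n - 2 * j).factorial * (a / (2 * j).factorial) := by
      simp only [mul_ite, mul_zero]
      rw [← Finset.sum_filter]
      refine Finset.sum_nbij' (fun k => (n - k) / 2) (fun j => n - 2 * j)
        ?_ ?_ ?_ ?_ ?_
      · intro k hk
        simp only [Finset.mem_filter, Finset.mem_range, Nat.even_iff] at hk ⊢
        omega
      · intro j hj
        simp only [Finset.mem_filter, Finset.mem_range, Nat.even_iff] at hj ⊢
        omega
      · intro k hk
        simp only [Finset.mem_filter, Finset.mem_range, Nat.even_iff] at hk
        omega
      · intro j hj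
        simp only [Finset.mem_range] at hj
        omega
      · intro k hk
        simp only [Finset.mem_filter, Finset.mem_range, Nat.even_iff] at hk
        have h1 : n - 2 * ((n - k) / 2) = k := by omega
        have h2 : 2 * ((n - k) / 2) = n - k := by omega
        rw [h1, h2]
    rw [hS1, hS2, Finset.sum_range_succ']
    have hE := E_div_fact a n hn
    have h1 : ∑ i ∈ Finset.range (n / 2),
        E a (n - 2 * (i + 1)) / (n - 2 * (i + 1)).factorial * (a / (2 * (i + 1)).factorial) =
        a * ∑ i ∈ Finset.range (n / 2),
          E a (n - 2 * (1 + i)) /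
            ((2 * (1 + i)).factorial * (n - 2 * (1 + i)).factorial) := by
      rw [Finset.mul_sum]
      refine Finset.sum_congr rfl fun i _ => ?_
      rw [add_comm 1 i]
      rw [div_mul_div_comm]
      rw [mul_comm ((n - 2 * (i + 1)).factorial : ℝ) _]
      ring
    rw [h1]
    simp only [mul_zero, Nat.sub_zero, Nat.factorial_zero, Nat.cast_one]
    rw [hE]
    ring
end

section
/- For any real number a, the generalized Euler polynomials satisfy E_{n,a}(1-x) = ∑_{k=0}^{n} C(n,k) (-1)^k E_{k,a}(x). -/
open Finset

lemma E_odd (a : ℝ) : ∀ n, Odd n → E a n = 0 := by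
  intro n
  induction n using Nat.strong_induction_on with
  | _ n ih =>
    intro hn
    match n, hn with
    | m + 1, h =>
      rw [E]
      have : ∀ k ∈ (Finset.Icc 1 ((m + 1) / 2)).attach,
          ((m + 1).choose (2 * k.1) : ℝ) * E a (m + 1 - 2 * k.1) = 0 := by
        intro k _
        have hk := Finset.mem_Icc.mp k.2
        have h1 : m + 1 - 2 * k.1 < m + 1 := by omega
        have h2 : Odd (m + 1 - 2 * k.1) := by
          rcases h with ⟨t, ht⟩
          refine ⟨t - k.1, by omega⟩
        rw [ih _ h1 h2, mul_zero]
      rw [Finset.sum_eq_zero this, mul_zero]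

lemma E_neg_one_pow (a : ℝ) (j : ℕ) : E a j * (-1 : ℝ) ^ j = E a j := by
  rcases Nat.even_or_odd j with hj | hj
  · rw [hj.neg_one_pow, mul_one]
  · rw [E_odd a j hj, zero_mul]

theorem stmt2 (a x : ℝ) (n : ℕ) :
    EP a n (1 - x) = ∑ k ∈ Finset.range (n + 1), (n.choose k : ℝ) * (-1) ^ k * EP a k x := by
  unfold EP
  have key : ∀ N : ℕ, (1 - x) ^ N = ∑ m ∈ Finset.range (N + 1),
      ((N.choose m : ℝ)) * (-1) ^ m * x ^ m := by
    intro N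
    rw [show (1 - x) = (-x) + 1 by ring, add_pow]
    refine Finset.sum_congr rfl fun m hm => ?_
    rw [one_pow, neg_pow]
    ring
  have hL : ∑ k ∈ Finset.range (n + 1), (n.choose k : ℝ) * E a k * (1 - x) ^ (n - k)
      = ∑ p ∈ (Finset.range (n + 1)).sigma (fun j => Finset.range (n + 1 - j)),
        (n.choose p.1 : ℝ) * E a p.1 * (((n - p.1).choose p.2 : ℝ) * (-1) ^ p.2 * x ^ p.2) := by
    rw [Finset.sum_sigma]
    refine Finset.sum_congr rfl fun k hk => ?_
    have hk' : k ≤ n := by simpa using Nat.lt_succ_iff.mp (Finset.mem_range.mp hk)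
    rw [key (n - k), Finset.mul_sum]
    have : n - k + 1 = n + 1 - k := by omega
    rw [this]
  have hR : ∑ k ∈ Finset.range (n + 1), (n.choose k : ℝ) * (-1) ^ k *
        (∑ j ∈ Finset.range (k + 1), (k.choose j : ℝ) * E a j * x ^ (k - j))
      = ∑ p ∈ (Finset.range (n + 1)).sigma (fun k => Finset.range (k + 1)),
        (n.choose p.1 : ℝ) * (-1) ^ p.1 * ((p.1.choose p.2 : ℝ) * E a p.2 * x ^ (p.1 - p.2)) := by
    rw [Finset.sum_sigma]
    refine Finset.sum_congr rfl fun k hk => ?_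
    rw [Finset.mul_sum]
  rw [hL, hR]
  refine Finset.sum_nbij' (fun p => ⟨p.1 + p.2, p.1⟩) (fun p => ⟨p.2, p.1 - p.2⟩) ?_ ?_ ?_ ?_ ?_
  · intro p hp
    simp only [Finset.mem_sigma, Finset.mem_range] at hp ⊢
    omega
  · intro p hp
    simp only [Finset.mem_sigma, Finset.mem_range] at hp ⊢
    omega
  · intro p hp
    simp only [Finset.mem_sigma, Finset.mem_range] at hp
    ext <;> simp <;> omega
  · intro p hp
    simp only [Finset.mem_sigma, Finset.mem_range] at hp
    ext <;> simp <;> omega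
  · intro p hp
    obtain ⟨j, m⟩ := p
    simp only [Finset.mem_sigma, Finset.mem_range] at hp
    simp only
    have hjm : j + m ≤ n := by omega
    set k := j + m with hk
    have hjk : j ≤ k := by omega
    have hkn : k ≤ n := by omega
    have hkj : k - j = m := by omega
    have hch : (n.choose k : ℝ) * (k.choose j : ℝ) = (n.choose j : ℝ) * ((n - j).choose (k - j) : ℝ) := by
      norm_cast
      exact Nat.choose_mul hjk
    have hsign : (-1 : ℝ) ^ k * E a j = (-1) ^ (k - j) * E a j := by
      have h1 : ((-1 : ℝ)) ^ k = (-1) ^ (k - j) * (-1) ^ j := by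
        rw [← pow_add]; congr 1; omega
      rw [h1, mul_assoc, mul_comm ((-1:ℝ)^j) (E a j), E_neg_one_pow]
    calc (n.choose j : ℝ) * E a j * (((n - j).choose m : ℝ) * (-1) ^ m * x ^ m)
        = ((n.choose j : ℝ) * ((n - j).choose (k - j) : ℝ)) * ((-1) ^ (k - j) * E a j) * x ^ (k - j) := by
          rw [hkj]; ring
      _ = ((n.choose k : ℝ) * (k.choose j : ℝ)) * ((-1) ^ k * E a j) * x ^ (k - j) := by
          rw [hch, hsign]
      _ = (n.choose k : ℝ) * (-1) ^ k * ((k.choose j : ℝ) * E a j * x ^ (k - j)) := by ring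
end

section
/- For any real number a and positive integer n, (a/2)(E_{n,a}(x+1) + E_{n,a}(x-1)) + (1-a) E_{n,a}(x) = x^n. -/
open Finset

lemma lemA (a x : ℝ) (m : ℕ) :
    a / 2 * ((x + 1) ^ m + (x - 1) ^ m) + (1 - a) * x ^ m
    = x ^ m + a * ∑ i ∈ Icc 1 (m / 2), (m.choose (2 * i) : ℝ) * x ^ (m - 2 * i) := by
  have h1 : (x + 1) ^ m = ∑ k ∈ range (m + 1), (m.choose k : ℝ) * x ^ (m - k) := by
    rw [show x + 1 = 1 + x by ring, add_pow]
    exact Finset.sum_congr rfl fun k hk => by ring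
  have h2 : (x - 1) ^ m = ∑ k ∈ range (m + 1), (-1 : ℝ) ^ k * (m.choose k : ℝ) * x ^ (m - k) := by
    rw [show x - 1 = -1 + x by ring, add_pow]
    exact Finset.sum_congr rfl fun k hk => by ring
  have key : (x + 1) ^ m + (x - 1) ^ m
      = 2 * x ^ m + 2 * ∑ i ∈ Icc 1 (m / 2), (m.choose (2 * i) : ℝ) * x ^ (m - 2 * i) := by
    rw [h1, h2, ← Finset.sum_add_distrib]
    have e1 : ∀ k ∈ range (m + 1), (m.choose k : ℝ) * x ^ (m - k)
        + (-1 : ℝ) ^ k * (m.choose k : ℝ) * x ^ (m - k)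
        = (1 + (-1 : ℝ) ^ k) * ((m.choose k : ℝ) * x ^ (m - k)) := fun k hk => by ring
    rw [Finset.sum_congr rfl e1]
    rw [← Finset.sum_filter_of_ne (p := fun k => Even k)
      (fun k _ h => by
        by_contra he
        rw [Odd.neg_one_pow (Nat.not_even_iff_odd.mp he)] at h
        simp at h)]
    rw [Finset.sum_nbij' (i := fun k => k / 2) (j := fun i => 2 * i)
      (t := range (m / 2 + 1))
      (f := fun k => (1 + (-1 : ℝ) ^ k) * ((m.choose k : ℝ) * x ^ (m - k)))
      (g := fun i => (1 + (-1 : ℝ) ^ (2 * i)) * ((m.choose (2 * i) : ℝ) * x ^ (m - 2 * i)))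
      (hi := fun k hk => by
        simp only [mem_filter, mem_range] at hk ⊢
        omega)
      (hj := fun i hi => by
        simp only [mem_filter, mem_range] at hi ⊢
        exact ⟨by omega, even_two_mul i⟩)
      (left_neg := fun k hk => by
        simp only [mem_filter] at hk
        obtain ⟨c, hc⟩ := hk.2
        show 2 * (k / 2) = k
        omega)
      (right_neg := fun i hi => by show 2 * i / 2 = i; omega)
      (h := fun k hk => by
        simp only [mem_filter] at hk
        obtain ⟨c, hc⟩ := hk.2
        have : 2 * (k / 2) = k := by omega
        simp only [this])]
    have e2 : ∀ i, (1 + (-1 : ℝ) ^ (2 * i)) * ((m.choose (2 * i) : ℝ) * x ^ (m - 2 * i))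
        = 2 * ((m.choose (2 * i) : ℝ) * x ^ (m - 2 * i)) := fun i => by
      rw [pow_mul]; norm_num
    simp only [e2]
    rw [Finset.sum_range_succ']
    rw [show Icc 1 (m / 2) = Ico 1 (m / 2 + 1) from (Finset.Ico_add_one_right_eq_Icc 1 (m/2)).symm,
      Finset.sum_Ico_eq_sum_range]
    simp only [Nat.add_sub_cancel, Nat.mul_zero, Nat.sub_zero, pow_zero, Nat.choose_zero_right,
      Nat.cast_one, one_mul, mul_one, Finset.mul_sum]
    rw [add_comm]
    congr 1
    exact Finset.sum_congr rfl fun i hi => by rw [Nat.add_comm 1 i]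
  rw [key]; ring

lemma E_succ (a : ℝ) (m : ℕ) :
    E a (m + 1) = -a * ∑ j ∈ Icc 1 ((m + 1) / 2),
      ((m + 1).choose (2 * j) : ℝ) * E a (m + 1 - 2 * j) := by
  rw [E]
  congr 1
  exact Finset.sum_attach (Icc 1 ((m + 1) / 2)) (fun j => ((m + 1).choose (2 * j) : ℝ) * E a (m + 1 - 2 * j))

lemma lemB (a x : ℝ) (n : ℕ) :
    EP a n x + a * ∑ m ∈ range (n + 1), (n.choose m : ℝ) *
      (∑ j ∈ Icc 1 (m / 2), (m.choose (2 * j) : ℝ) * E a (m - 2 * j)) * x ^ (n - m)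
    = x ^ n := by
  rw [EP, Finset.mul_sum, ← Finset.sum_add_distrib]
  rw [Finset.sum_eq_single_of_mem 0 (Finset.mem_range.mpr (Nat.succ_pos n))]
  · simp [E]
  · intro m hm hm0
    obtain ⟨m', rfl⟩ := Nat.exists_eq_succ_of_ne_zero hm0
    rw [E_succ]
    ring

lemma lemC (a x : ℝ) (n : ℕ) :
    ∑ k ∈ range (n + 1), (n.choose k : ℝ) * E a k *
      (∑ j ∈ Icc 1 ((n - k) / 2), ((n - k).choose (2 * j) : ℝ) * x ^ (n - k - 2 * j))
    = ∑ m ∈ range (n + 1), (n.choose m : ℝ) *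
      (∑ j ∈ Icc 1 (m / 2), (m.choose (2 * j) : ℝ) * E a (m - 2 * j)) * x ^ (n - m) := by
  have hT : ∀ k, (n.choose k : ℝ) * E a k *
      (∑ j ∈ Icc 1 ((n - k) / 2), ((n - k).choose (2 * j) : ℝ) * x ^ (n - k - 2 * j))
      = ∑ j ∈ Icc 1 ((n - k) / 2),
        (n.choose k : ℝ) * ((n - k).choose (2 * j) : ℝ) * E a k * x ^ (n - k - 2 * j) := by
    intro k
    rw [Finset.mul_sum]
    exact Finset.sum_congr rfl fun j hj => by ring
  have hU : ∀ m, (n.choose m : ℝ) *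
      (∑ j ∈ Icc 1 (m / 2), (m.choose (2 * j) : ℝ) * E a (m - 2 * j)) * x ^ (n - m)
      = ∑ j ∈ Icc 1 (m / 2),
        (n.choose m : ℝ) * (m.choose (2 * j) : ℝ) * E a (m - 2 * j) * x ^ (n - m) := by
    intro m
    rw [Finset.mul_sum, Finset.sum_mul]
    exact Finset.sum_congr rfl fun j hj => by ring
  simp only [hT, hU]
  rw [Finset.sum_sigma', Finset.sum_sigma']
  refine Finset.sum_nbij' (i := fun p => ⟨p.1 + 2 * p.2, p.2⟩) (j := fun p => ⟨p.1 - 2 * p.2, p.2⟩)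
    ?_ ?_ ?_ ?_ ?_
  · rintro ⟨k, j⟩ hp
    simp only [Finset.mem_sigma, Finset.mem_range, Finset.mem_Icc] at hp ⊢
    omega
  · rintro ⟨m, j⟩ hp
    simp only [Finset.mem_sigma, Finset.mem_range, Finset.mem_Icc] at hp ⊢
    omega
  · rintro ⟨k, j⟩ hp
    simp only [Finset.mem_sigma, Finset.mem_range, Finset.mem_Icc] at hp
    simp only [Sigma.mk.inj_iff, heq_eq_eq, and_true]
    omega
  · rintro ⟨m, j⟩ hp
    simp only [Finset.mem_sigma, Finset.mem_range, Finset.mem_Icc] at hp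
    simp only [Sigma.mk.inj_iff, heq_eq_eq, and_true]
    omega
  · rintro ⟨k, j⟩ hp
    simp only [Finset.mem_sigma, Finset.mem_range, Finset.mem_Icc] at hp
    have h1 : k + 2 * j ≤ n := by omega
    have h2 : k + 2 * j - 2 * j = k := by omega
    have h3 : n - (k + 2 * j) = n - k - 2 * j := by omega
    have hch : (n.choose (k + 2 * j)) * ((k + 2 * j).choose (2 * j))
        = (n.choose k) * ((n - k).choose (2 * j)) := by
      have h4 := Nat.choose_mul (n := n) (k := k + 2 * j) (s := k) (Nat.le_add_right _ _)
      rw [Nat.add_sub_cancel_left] at h4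
      have h5 : (k + 2 * j).choose (2 * j) = (k + 2 * j).choose k := by
        exact Nat.choose_symm_of_eq_add (by omega)
      rw [h5, h4]
    have hchR : ((n.choose (k + 2 * j)) : ℝ) * (((k + 2 * j).choose (2 * j)) : ℝ)
        = ((n.choose k) : ℝ) * (((n - k).choose (2 * j)) : ℝ) := by exact_mod_cast hch
    show (n.choose k : ℝ) * ((n - k).choose (2 * j) : ℝ) * E a k * x ^ (n - k - 2 * j)
      = (n.choose (k + 2 * j) : ℝ) * ((k + 2 * j).choose (2 * j) : ℝ)
        * E a (k + 2 * j - 2 * j) * x ^ (n - (k + 2 * j))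
    rw [h2, h3, hchR]

theorem stmt3 (a x : ℝ) (n : ℕ) (hn : 1 ≤ n) :
    a / 2 * (EP a n (x + 1) + EP a n (x - 1)) + (1 - a) * EP a n x = x ^ n := by
  have step1 : a / 2 * (EP a n (x + 1) + EP a n (x - 1)) + (1 - a) * EP a n x
      = ∑ k ∈ range (n + 1), (n.choose k : ℝ) * E a k *
        (a / 2 * ((x + 1) ^ (n - k) + (x - 1) ^ (n - k)) + (1 - a) * x ^ (n - k)) := by
    rw [EP, EP, EP, mul_add, Finset.mul_sum, Finset.mul_sum, Finset.mul_sum,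
      ← Finset.sum_add_distrib, ← Finset.sum_add_distrib]
    exact Finset.sum_congr rfl fun k hk => by ring
  rw [step1]
  have step2 : ∀ k ∈ range (n + 1), (n.choose k : ℝ) * E a k *
        (a / 2 * ((x + 1) ^ (n - k) + (x - 1) ^ (n - k)) + (1 - a) * x ^ (n - k))
      = (n.choose k : ℝ) * E a k * x ^ (n - k)
        + a * ((n.choose k : ℝ) * E a k *
          (∑ j ∈ Icc 1 ((n - k) / 2), ((n - k).choose (2 * j) : ℝ) * x ^ (n - k - 2 * j))) := by
    intro k hk
    rw [lemA a x (n - k)]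
    ring
  rw [Finset.sum_congr rfl step2, Finset.sum_add_distrib, ← Finset.mul_sum, lemC]
  have h := lemB a x n
  rw [EP] at h
  linarith
end

section
/- For any real number a, any real numbers x, y, and any positive integer n, ∑_{k=0}^{n} C(n,k) E_{n-k,a}(x) [ (a/2)((y+1)^k + (y-1)^k) + (1-a) y^k ] = (x+y)^n. -/
open Finset

lemma E_zero (a : ℝ) : E a 0 = 1 := by rw [E]

lemma choose_sub_comm (n k i : ℕ) :
    n.choose k * (n - k).choose i = n.choose i * (n - i).choose k := by
  rcases Nat.lt_or_ge n k with hk | hk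
  · rw [Nat.choose_eq_zero_of_lt hk, Nat.choose_eq_zero_of_lt (show n - i < k by omega)]
    ring
  rcases Nat.lt_or_ge n i with hi | hi
  · rw [Nat.choose_eq_zero_of_lt (show n - k < i by omega), Nat.choose_eq_zero_of_lt hi]
    ring
  rcases le_or_gt (k + i) n with h | h
  · have h1 := Nat.choose_mul (n := n) (k := k + i) (s := k) (Nat.le_add_right k i)
    have h2 := Nat.choose_mul (n := n) (k := k + i) (s := i) (Nat.le_add_left i k)
    simp only [Nat.add_sub_cancel_left, Nat.add_sub_cancel] at h1 h2
    rw [← h1, ← h2, Nat.choose_symm_add]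
  · rw [Nat.choose_eq_zero_of_lt (show n - k < i by omega),
      Nat.choose_eq_zero_of_lt (show n - i < k by omega)]
    ring

lemma key (a : ℝ) (r : ℕ) :
    ∑ k ∈ range (r + 1), (r.choose k : ℝ) * E a k * (a / 2 * (1 + (-1 : ℝ) ^ (r - k)))
      = (if r = 0 then (1 : ℝ) else 0) - (1 - a) * E a r := by
  have h1 : ∀ k ∈ range (r + 1), (r.choose k : ℝ) * E a k * (a / 2 * (1 + (-1 : ℝ) ^ (r - k)))
      = if Even (r - k) then a * (r.choose k : ℝ) * E a k else 0 := by
    intro k _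
    rcases Nat.even_or_odd (r - k) with h | h
    · rw [if_pos h, h.neg_one_pow]; ring
    · have ho := Nat.odd_iff.mp h
      rw [if_neg (by simp [Nat.even_iff, ho]), h.neg_one_pow]
      ring
  rw [Finset.sum_congr rfl h1, ← Finset.sum_filter]
  have h2 : ∑ k ∈ (range (r + 1)).filter (fun k => Even (r - k)), a * (r.choose k : ℝ) * E a k
      = ∑ j ∈ Finset.Icc 0 (r / 2), a * (r.choose (2 * j) : ℝ) * E a (r - 2 * j) := by
    apply Finset.sum_nbij' (i := fun k => (r - k) / 2) (j := fun j => r - 2 * j)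
    · intro k hk
      simp only [Finset.mem_filter, Finset.mem_range] at hk
      obtain ⟨hk1, c, hc⟩ := hk
      simp only [Finset.mem_Icc]
      omega
    · intro j hj
      simp only [Finset.mem_Icc] at hj
      simp only [Finset.mem_filter, Finset.mem_range]
      exact ⟨by omega, ⟨j, by omega⟩⟩
    · intro k hk
      simp only [Finset.mem_filter, Finset.mem_range] at hk
      obtain ⟨hk1, c, hc⟩ := hk
      omega
    · intro j hj
      simp only [Finset.mem_Icc] at hj
      omega
    · intro k hk
      simp only [Finset.mem_filter, Finset.mem_range] at hk
      obtain ⟨hk1, c, hc⟩ := hk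
      have e1 : 2 * ((r - k) / 2) = r - k := by omega
      have e2 : r - 2 * ((r - k) / 2) = k := by omega
      rw [e2]
      congr 2
      rw [e1, Nat.choose_symm (by omega)]
  rw [h2]
  have h3 : Finset.Icc 0 (r / 2) = insert 0 (Finset.Icc 1 (r / 2)) := by
    ext j
    simp only [Finset.mem_Icc, Finset.mem_insert]
    omega
  rw [h3, Finset.sum_insert (by simp)]
  rcases Nat.eq_zero_or_pos r with rfl | hr
  · simp [E_zero]
  · obtain ⟨n, rfl⟩ := Nat.exists_eq_succ_of_ne_zero (Nat.pos_iff_ne_zero.mp hr)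
    rw [if_neg (by omega)]
    have hE := E_rec a n
    simp only [Nat.mul_zero, Nat.zero_mul, Nat.choose_zero_right, Nat.sub_zero, Nat.cast_one]
    rw [show ∑ j ∈ Finset.Icc 1 ((n + 1) / 2), a * ((n + 1).choose (2 * j) : ℝ) * E a (n + 1 - 2 * j)
        = a * ∑ j ∈ Finset.Icc 1 ((n + 1) / 2), ((n + 1).choose (2 * j) : ℝ) * E a (n + 1 - 2 * j) by
      rw [Finset.mul_sum]; exact Finset.sum_congr rfl fun j _ => by ring]
    rw [hE]
    ring

noncomputable def F (a y : ℝ) (j : ℕ) : ℝ :=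
  a / 2 * ((y + 1) ^ j + (y - 1) ^ j) + (1 - a) * y ^ j

lemma F_expand (a y : ℝ) (j : ℕ) :
    F a y j = (∑ i ∈ range (j + 1),
        (j.choose i : ℝ) * y ^ i * (a / 2 * (1 + (-1 : ℝ) ^ (j - i)))) + (1 - a) * y ^ j := by
  have h1 : (y + 1) ^ j = ∑ i ∈ range (j + 1), y ^ i * 1 ^ (j - i) * (j.choose i : ℝ) :=
    add_pow y 1 j
  have h2 : (y - 1) ^ j = ∑ i ∈ range (j + 1), y ^ i * (-1 : ℝ) ^ (j - i) * (j.choose i : ℝ) := by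
    rw [show y - 1 = y + (-1) by ring, add_pow]
  rw [F, h1, h2, ← Finset.sum_add_distrib, Finset.mul_sum]
  congr 1
  exact Finset.sum_congr rfl fun i _ => by ring

lemma conv (a y : ℝ) (m : ℕ) :
    ∑ k ∈ range (m + 1), (m.choose k : ℝ) * E a k * F a y (m - k) = y ^ m := by
  have hsplit : ∀ k ∈ range (m + 1), (m.choose k : ℝ) * E a k * F a y (m - k)
      = (m.choose k : ℝ) * E a k * (∑ i ∈ range (m - k + 1),
          ((m - k).choose i : ℝ) * y ^ i * (a / 2 * (1 + (-1 : ℝ) ^ (m - k - i))))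
        + (m.choose k : ℝ) * E a k * ((1 - a) * y ^ (m - k)) := by
    intro k _
    rw [F_expand, mul_add]
  rw [Finset.sum_congr rfl hsplit, Finset.sum_add_distrib]
  have hB : ∑ k ∈ range (m + 1), (m.choose k : ℝ) * E a k * ((1 - a) * y ^ (m - k))
      = ∑ i ∈ range (m + 1), (m.choose i : ℝ) * ((1 - a) * E a (m - i)) * y ^ i := by
    rw [← Finset.sum_range_reflect
      (fun k => (m.choose k : ℝ) * E a k * ((1 - a) * y ^ (m - k))) (m + 1)]
    apply Finset.sum_congr rfl
    intro i hi
    simp only [Finset.mem_range] at hi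
    have e1 : m + 1 - 1 - i = m - i := by omega
    have e2 : m - (m - i) = i := by omega
    rw [e1, e2, Nat.choose_symm (by omega)]
    ring
  have hA : ∑ k ∈ range (m + 1), (m.choose k : ℝ) * E a k *
        (∑ i ∈ range (m - k + 1),
          ((m - k).choose i : ℝ) * y ^ i * (a / 2 * (1 + (-1 : ℝ) ^ (m - k - i))))
      = ∑ i ∈ range (m + 1), (m.choose i : ℝ) * y ^ i *
        ((if m - i = 0 then (1 : ℝ) else 0) - (1 - a) * E a (m - i)) := by
    have hext : ∀ k ∈ range (m + 1),
        (m.choose k : ℝ) * E a k * (∑ i ∈ range (m - k + 1),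
          ((m - k).choose i : ℝ) * y ^ i * (a / 2 * (1 + (-1 : ℝ) ^ (m - k - i))))
        = ∑ i ∈ range (m + 1), (m.choose k : ℝ) * E a k *
          (((m - k).choose i : ℝ) * y ^ i * (a / 2 * (1 + (-1 : ℝ) ^ (m - k - i)))) := by
      intro k hk
      simp only [Finset.mem_range] at hk
      rw [Finset.mul_sum]
      apply Finset.sum_subset
      · intro i hi
        simp only [Finset.mem_range] at hi ⊢
        omega
      · intro i hi hni
        simp only [Finset.mem_range] at hi hni
        rw [show (m - k).choose i = 0 from Nat.choose_eq_zero_of_lt (by omega)]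
        push_cast
        ring
    rw [Finset.sum_congr rfl hext, Finset.sum_comm]
    apply Finset.sum_congr rfl
    intro i hi
    simp only [Finset.mem_range] at hi
    have hterm : ∀ k ∈ range (m + 1),
        (m.choose k : ℝ) * E a k *
          (((m - k).choose i : ℝ) * y ^ i * (a / 2 * (1 + (-1 : ℝ) ^ (m - k - i))))
        = (m.choose i : ℝ) * y ^ i *
          (((m - i).choose k : ℝ) * E a k * (a / 2 * (1 + (-1 : ℝ) ^ (m - i - k)))) := by
      intro k hk
      simp only [Finset.mem_range] at hk
      rcases le_or_gt (k + i) m with h | h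
      · have he : m - k - i = m - i - k := by omega
        rw [he]
        have hc' : (m.choose k : ℝ) * ((m - k).choose i : ℝ)
            = (m.choose i : ℝ) * ((m - i).choose k : ℝ) := by
          exact_mod_cast choose_sub_comm m k i
        linear_combination (E a k * y ^ i * (a / 2 * (1 + (-1 : ℝ) ^ (m - i - k)))) * hc'
      · rw [Nat.choose_eq_zero_of_lt (show m - k < i by omega),
          Nat.choose_eq_zero_of_lt (show m - i < k by omega)]
        push_cast
        ring
    rw [Finset.sum_congr rfl hterm, ← Finset.mul_sum]
    have hshrink : ∑ k ∈ range (m + 1),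
        (((m - i).choose k : ℝ) * E a k * (a / 2 * (1 + (-1 : ℝ) ^ (m - i - k))))
        = ∑ k ∈ range (m - i + 1),
          (((m - i).choose k : ℝ) * E a k * (a / 2 * (1 + (-1 : ℝ) ^ (m - i - k)))) := by
      symm
      apply Finset.sum_subset
      · intro k hk
        simp only [Finset.mem_range] at hk ⊢
        omega
      · intro k hk hnk
        simp only [Finset.mem_range] at hk hnk
        rw [show (m - i).choose k = 0 from Nat.choose_eq_zero_of_lt (by omega)]
        push_cast
        ring
    rw [hshrink, key]
  rw [hA, hB, ← Finset.sum_add_distrib]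
  have hfin : ∀ i ∈ range (m + 1),
      (m.choose i : ℝ) * y ^ i * ((if m - i = 0 then (1 : ℝ) else 0) - (1 - a) * E a (m - i))
        + (m.choose i : ℝ) * ((1 - a) * E a (m - i)) * y ^ i
      = if i = m then y ^ m else 0 := by
    intro i hi
    simp only [Finset.mem_range] at hi
    rcases eq_or_ne i m with rfl | hne
    · rw [if_pos rfl, if_pos (by omega), Nat.sub_self, Nat.choose_self, E_zero]
      push_cast
      ring
    · rw [if_neg hne, if_neg (by omega)]
      ring
  rw [Finset.sum_congr rfl hfin, Finset.sum_ite_eq' (range (m + 1)) m (fun _ => y ^ m),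
    if_pos (by simp)]

lemma conv' (a y : ℝ) (r : ℕ) :
    ∑ k ∈ range (r + 1), (r.choose k : ℝ) * E a (r - k) * F a y k = y ^ r := by
  rw [← Finset.sum_range_reflect
    (fun k => (r.choose k : ℝ) * E a (r - k) * F a y k) (r + 1), ← conv a y r]
  apply Finset.sum_congr rfl
  intro k hk
  simp only [Finset.mem_range] at hk
  have e1 : r + 1 - 1 - k = r - k := by omega
  have e2 : r - (r - k) = k := by omega
  rw [e1, e2, Nat.choose_symm (by omega)]

lemma EP_reflect (a x : ℝ) (r : ℕ) :
    EP a r x = ∑ i ∈ range (r + 1), (r.choose i : ℝ) * E a (r - i) * x ^ i := by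
  rw [EP, ← Finset.sum_range_reflect
    (fun k => (r.choose k : ℝ) * E a k * x ^ (r - k)) (r + 1)]
  apply Finset.sum_congr rfl
  intro i hi
  simp only [Finset.mem_range] at hi
  have e1 : r + 1 - 1 - i = r - i := by omega
  have e2 : r - (r - i) = i := by omega
  rw [e1, e2, Nat.choose_symm (by omega)]

theorem stmt4 (a x y : ℝ) (n : ℕ) (hn : 1 ≤ n) :
    ∑ k ∈ Finset.range (n + 1), (n.choose k : ℝ) * EP a (n - k) x *
        (a / 2 * ((y + 1) ^ k + (y - 1) ^ k) + (1 - a) * y ^ k) = (x + y) ^ n := by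
  show (∑ k ∈ Finset.range (n + 1), (n.choose k : ℝ) * EP a (n - k) x * F a y k) = (x + y) ^ n
  have hstep : ∀ k ∈ Finset.range (n + 1),
      (n.choose k : ℝ) * EP a (n - k) x * F a y k
      = ∑ i ∈ Finset.range (n + 1),
          (n.choose k : ℝ) * (((n - k).choose i : ℝ) * E a (n - k - i) * x ^ i) * F a y k := by
    intro k hk
    simp only [Finset.mem_range] at hk
    rw [EP_reflect, Finset.mul_sum, Finset.sum_mul]
    apply Finset.sum_subset
    · intro i hi
      simp only [Finset.mem_range] at hi ⊢
      omega
    · intro i hi hni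
      simp only [Finset.mem_range] at hi hni
      rw [show (n - k).choose i = 0 from Nat.choose_eq_zero_of_lt (by omega)]
      push_cast
      ring
  rw [Finset.sum_congr rfl hstep, Finset.sum_comm]
  have hinner : ∀ i ∈ Finset.range (n + 1),
      ∑ k ∈ Finset.range (n + 1),
        (n.choose k : ℝ) * (((n - k).choose i : ℝ) * E a (n - k - i) * x ^ i) * F a y k
      = x ^ i * y ^ (n - i) * (n.choose i : ℝ) := by
    intro i hi
    simp only [Finset.mem_range] at hi
    have hterm : ∀ k ∈ Finset.range (n + 1),
        (n.choose k : ℝ) * (((n - k).choose i : ℝ) * E a (n - k - i) * x ^ i) * F a y k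
        = x ^ i * (n.choose i : ℝ) * (((n - i).choose k : ℝ) * E a (n - i - k) * F a y k) := by
      intro k hk
      simp only [Finset.mem_range] at hk
      rcases le_or_gt (k + i) n with h | h
      · have he : n - k - i = n - i - k := by omega
        rw [he]
        have hc' : (n.choose k : ℝ) * ((n - k).choose i : ℝ)
            = (n.choose i : ℝ) * ((n - i).choose k : ℝ) := by
          exact_mod_cast choose_sub_comm n k i
        linear_combination (E a (n - i - k) * x ^ i * F a y k) * hc'
      · rw [Nat.choose_eq_zero_of_lt (show n - k < i by omega),
          Nat.choose_eq_zero_of_lt (show n - i < k by omega)]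
        push_cast
        ring
    rw [Finset.sum_congr rfl hterm, ← Finset.mul_sum]
    have hshrink : ∑ k ∈ Finset.range (n + 1),
        (((n - i).choose k : ℝ) * E a (n - i - k) * F a y k)
        = ∑ k ∈ Finset.range (n - i + 1),
          (((n - i).choose k : ℝ) * E a (n - i - k) * F a y k) := by
      symm
      apply Finset.sum_subset
      · intro k hk
        simp only [Finset.mem_range] at hk ⊢
        omega
      · intro k hk hnk
        simp only [Finset.mem_range] at hk hnk
        rw [show (n - i).choose k = 0 from Nat.choose_eq_zero_of_lt (by omega)]
        push_cast
        ring
    rw [hshrink, conv']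
    ring
  rw [Finset.sum_congr rfl hinner]
  exact (add_pow x y n).symm
end

section
/- For any nonzero real number a and any positive integer n, ∑_{k=1}^{n} C(2n,2k) 3^{2k} E_{2n-2k,a} = 2^{2n+1}/a + 4(a-1)/a^2 - ((3a-2)^2/a^3) E_{2n,a}. -/
open Finset

open PowerSeries


noncomputable def csh (c : ℝ) : PowerSeries ℝ :=
  rescale c (exp ℝ) + rescale (-c) (exp ℝ)

lemma coeff_csh (c : ℝ) (n : ℕ) :
    PowerSeries.coeff n (csh c) = (c ^ n + (-c) ^ n) / n.factorial := by
  simp [csh, coeff_rescale, coeff_exp]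
  ring

lemma csh_zero : csh 0 = 2 := by
  simp only [csh, rescale_zero, RingHom.comp_apply, constantCoeff_exp, map_one]
  norm_num

lemma csh_mul (c d : ℝ) : csh c * csh d = csh (c + d) + csh (c - d) := by
  have e1 := exp_mul_exp_eq_exp_add (A := ℝ) c d
  have e2 : rescale c (exp ℝ) * rescale (-d) (exp ℝ) = rescale (c - d) (exp ℝ) := by
    have := exp_mul_exp_eq_exp_add (A := ℝ) c (-d)
    rwa [show c + -d = c - d by ring] at this
  have e3 : rescale (-c) (exp ℝ) * rescale d (exp ℝ) = rescale (-(c - d)) (exp ℝ) := by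
    have := exp_mul_exp_eq_exp_add (A := ℝ) (-c) d
    rwa [show -c + d = -(c - d) by ring] at this
  have e4 : rescale (-c) (exp ℝ) * rescale (-d) (exp ℝ) = rescale (-(c + d)) (exp ℝ) := by
    have := exp_mul_exp_eq_exp_add (A := ℝ) (-c) (-d)
    rwa [show -c + -d = -(c + d) by ring] at this
  unfold csh
  linear_combination e1 + e2 + e3 + e4

lemma Icc_one_sum (N : ℕ) (f : ℕ → ℝ) :
    ∑ k ∈ Finset.Icc 1 N, f k = ∑ i ∈ Finset.range N, f (i + 1) := by
  refine Finset.sum_nbij' (fun k => k - 1) (fun i => i + 1) ?_ ?_ ?_ ?_ ?_ <;>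
    intros x hx <;> simp [Finset.mem_Icc, Finset.mem_range] at hx ⊢ <;> try omega
  congr 1; omega

lemma reflect_even (m : ℕ) (f : ℕ → ℝ) (hf : ∀ j, ¬ Even j → f j = 0) :
    ∑ j ∈ Finset.range (m + 1), f j = ∑ k ∈ Finset.range (m / 2 + 1), f (2 * k) := by
  rw [← Finset.sum_filter_of_ne (p := fun j => Even j)
    (fun x _ hne => by by_contra h; exact hne (hf x h))]
  refine Finset.sum_nbij' (fun j => j / 2) (fun k => 2 * k) ?_ ?_ ?_ ?_ ?_ <;>
    intros x hx <;>
    simp [Finset.mem_filter, Finset.mem_range, Nat.even_iff] at hx ⊢ <;> try omega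
  congr 1; omega

lemma Esum (a : ℝ) (ha : a ≠ 0) (m : ℕ) (hm : 1 ≤ m) :
    a * ∑ k ∈ Finset.range (m / 2 + 1), ((m.choose (2 * k) : ℝ)) * E a (m - 2 * k)
      = (a - 1) * E a m := by
  obtain ⟨t, rfl⟩ : ∃ t, m = t + 1 := ⟨m - 1, by omega⟩
  have hrec : ∑ k ∈ Finset.Icc 1 ((t + 1) / 2), ((t + 1).choose (2 * k) : ℝ) *
      E a (t + 1 - 2 * k) = -E a (t + 1) / a := by
    have hdef : E a (t + 1) = -a * ∑ k ∈ (Finset.Icc 1 ((t + 1) / 2)).attach,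
        ((t + 1).choose (2 * k.1) : ℝ) * E a (t + 1 - 2 * k.1) := by
      rw [E]
    rw [Finset.sum_attach (Finset.Icc 1 ((t + 1) / 2))
      (fun k => ((t + 1).choose (2 * k) : ℝ) * E a (t + 1 - 2 * k))] at hdef
    rw [hdef]
    field_simp
  rw [Finset.sum_range_succ' (fun k => ((t + 1).choose (2 * k) : ℝ) * E a (t + 1 - 2 * k))]
  rw [mul_add,
    ← Icc_one_sum ((t+1)/2) (fun k => ((t + 1).choose (2 * k) : ℝ) * E a (t + 1 - 2 * k)), hrec]
  simp only [Nat.mul_zero, Nat.choose_zero_right, Nat.cast_one, Nat.sub_zero, one_mul]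
  field_simp
  ring

noncomputable def Eg (a : ℝ) : PowerSeries ℝ := PowerSeries.mk fun n => E a n / n.factorial

lemma coeff_Eg_mul_csh (a c : ℝ) (m : ℕ) :
    (m.factorial : ℝ) * PowerSeries.coeff m (Eg a * csh c) =
      ∑ j ∈ Finset.range (m + 1), (m.choose j : ℝ) * E a (m - j) * (c ^ j + (-c) ^ j) := by
  rw [PowerSeries.coeff_mul, Finset.Nat.sum_antidiagonal_eq_sum_range_succ_mk, Finset.mul_sum]
  rw [← Finset.sum_range_reflect (fun j => (m.choose j : ℝ) * E a (m - j) * (c ^ j + (-c) ^ j)) (m + 1)]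
  apply Finset.sum_congr rfl
  intro i hi
  simp only [Finset.mem_range] at hi
  have h1 : i ≤ m := by omega
  have h2 : m + 1 - 1 - i = m - i := by omega
  rw [h2]
  simp only [Eg, PowerSeries.coeff_mk, coeff_csh]
  have h3 : m - (m - i) = i := by omega
  rw [h3, Nat.choose_symm h1]
  have hfact : ((m.choose i : ℝ)) * i.factorial * (m - i).factorial = m.factorial := by
    exact_mod_cast Nat.choose_mul_factorial_mul_factorial h1
  have hi0 : (i.factorial : ℝ) ≠ 0 := by positivity
  have hmi0 : ((m - i).factorial : ℝ) ≠ 0 := by positivity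
  field_simp
  linear_combination (-(E a i * (c ^ (m - i) + (-c) ^ (m - i)))) * hfact

lemma EgD (a : ℝ) (ha : a ≠ 0) :
    Eg a * (PowerSeries.C a * csh 1 + (2 - 2 * PowerSeries.C a)) = 2 := by
  ext n
  have base : (n.factorial : ℝ) ≠ 0 := by positivity
  apply mul_left_cancel₀ base
  rw [show Eg a * (PowerSeries.C a * csh 1 + (2 - 2 * PowerSeries.C a))
      = PowerSeries.C a * (Eg a * csh 1) + (2 - 2 * PowerSeries.C a) * Eg a from by ring]
  rw [show (2 : PowerSeries ℝ) = PowerSeries.C 2 from (map_ofNat (PowerSeries.C (R := ℝ)) 2).symm]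
  rw [show PowerSeries.C 2 - PowerSeries.C 2 * PowerSeries.C a = PowerSeries.C (2 - 2*a)
      from by rw [← map_mul, ← map_sub]]
  simp only [map_add, PowerSeries.coeff_C_mul, PowerSeries.coeff_C]
  have hmain := coeff_Eg_mul_csh a 1 n
  cases n with
  | zero =>
      have hE0 : E a 0 = 1 := by rw [E]
      simp only [Nat.factorial_zero, Nat.cast_one, one_mul, Finset.range_one,
        Finset.sum_singleton, Nat.choose_self, Nat.sub_zero, hE0] at hmain
      norm_num at hmain ⊢
      have hEg0 : PowerSeries.constantCoeff (Eg a) = 1 := by simp [Eg, hE0]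
      rw [hmain, hE0, hEg0]
      ring
  | succ t =>
      rw [if_neg (by omega)]
      set m := t + 1 with hm
      have hodd : ∀ j, ¬ Even j →
          (m.choose j : ℝ) * E a (m - j) * ((1:ℝ) ^ j + (-1) ^ j) = 0 := by
        intro j hj
        have : ((-1:ℝ)) ^ j = -1 := Odd.neg_one_pow (Nat.odd_iff.mpr (by
          rcases Nat.even_or_odd j with h | h
          · exact absurd h hj
          · exact Nat.odd_iff.mp h))
        rw [this]
        ring
      have hsum : a * ∑ j ∈ Finset.range (m + 1),
          (m.choose j : ℝ) * E a (m - j) * ((1:ℝ) ^ j + (-1) ^ j)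
          = 2 * ((a - 1) * E a m) := by
        rw [reflect_even m _ hodd]
        have : ∀ k ∈ Finset.range (m / 2 + 1),
            (m.choose (2*k) : ℝ) * E a (m - 2*k) * ((1:ℝ) ^ (2*k) + (-1) ^ (2*k))
            = 2 * ((m.choose (2*k) : ℝ) * E a (m - 2*k)) := by
          intro k _
          rw [Even.neg_one_pow ⟨k, by ring⟩, one_pow]
          ring
        rw [Finset.sum_congr rfl this, ← Finset.mul_sum]
        linear_combination 2 * Esum a ha m (by omega)
      have hEgm : (m.factorial : ℝ) * PowerSeries.coeff m (Eg a) = E a m := by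
        simp only [Eg, PowerSeries.coeff_mk]
        field_simp
      linear_combination a * hmain + hsum + (2 - 2*a) * hEgm

lemma mainPS (a : ℝ) (ha : a ≠ 0) :
    PowerSeries.C (a^3) * (Eg a * csh 3) =
      PowerSeries.C (2*a^2) * csh 2 + PowerSeries.C (4*a^2 - 4*a) * csh 1 +
      PowerSeries.C (6*a^2 - 16*a + 8) +
      PowerSeries.C (2*a^3 - 18*a^2 + 24*a - 8) * Eg a := by
  have h1 : csh 2 * csh 1 = csh 3 + csh 1 := by
    have := csh_mul 2 1
    norm_num at this
    exact this
  have h2 : csh 1 * csh 1 = csh 2 + 2 := by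
    have := csh_mul 1 1
    norm_num [csh_zero] at this
    exact this
  have hD := EgD a ha
  set A := PowerSeries.C a with hA
  have hI1 : A^3 * csh 3 =
      (A^2 * csh 2 + (2*A^2 - 2*A) * csh 1 + (3*A^2 - 8*A + 4)) * (A * csh 1 + (2 - 2*A))
        + (2*A^3 - 18*A^2 + 24*A - 8) := by
    linear_combination (-(A^3)) * h1 + (-(2*A^3 - 2*A^2)) * h2
  simp only [map_pow, map_mul, map_sub, map_add, map_ofNat, ← hA]
  linear_combination (Eg a) * hI1 +
    (A^2 * csh 2 + (2*A^2 - 2*A) * csh 1 + (3*A^2 - 8*A + 4)) * hD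

theorem stmt9 (a : ℝ) (ha : a ≠ 0) (n : ℕ) (hn : 1 ≤ n) :
    ∑ k ∈ Finset.Icc 1 n, ((2 * n).choose (2 * k) : ℝ) * 3 ^ (2 * k) * E a (2 * n - 2 * k) =
      2 ^ (2 * n + 1) / a + 4 * (a - 1) / a ^ 2 - (3 * a - 2) ^ 2 / a ^ 3 * E a (2 * n) := by
  have hF : (((2*n).factorial : ℝ)) ≠ 0 := by positivity
  have h3 := congrArg (PowerSeries.coeff (2*n)) (mainPS a ha)
  simp only [map_add, PowerSeries.coeff_C_mul, coeff_csh, PowerSeries.coeff_C] at h3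
  simp only [if_neg (show ¬ 2*n = 0 by omega)] at h3
  have hEgm : PowerSeries.coeff (2*n) (Eg a) = E a (2*n) / (2*n).factorial := by
    simp [Eg]
  rw [hEgm] at h3
  have hneg2 : ((-2 : ℝ)) ^ (2*n) = 2 ^ (2*n) := Even.neg_pow ⟨n, by ring⟩ 2
  have hneg1 : ((-1 : ℝ)) ^ (2*n) = 1 := by
    rw [Even.neg_pow ⟨n, by ring⟩, one_pow]
  rw [hneg2, hneg1, one_pow] at h3
  have hT := coeff_Eg_mul_csh a 3 (2*n)
  have hodd3 : ∀ j, ¬ Even j →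
      ((2*n).choose j : ℝ) * E a (2*n - j) * ((3:ℝ) ^ j + (-3) ^ j) = 0 := by
    intro j hj
    have : ((-3:ℝ)) ^ j = -(3 ^ j) := Odd.neg_pow (Nat.odd_iff.mpr (by
      rcases Nat.even_or_odd j with h | h
      · exact absurd h hj
      · exact Nat.odd_iff.mp h)) 3
    rw [this]
    ring
  have hSf : ∑ j ∈ Finset.range (2*n + 1),
      ((2*n).choose j : ℝ) * E a (2*n - j) * ((3:ℝ) ^ j + (-3) ^ j)
      = 2 * ((∑ k ∈ Finset.Icc 1 n, ((2 * n).choose (2 * k) : ℝ) * 3 ^ (2 * k)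
          * E a (2 * n - 2 * k)) + E a (2*n)) := by
    rw [reflect_even (2*n) _ hodd3]
    have hn2 : 2*n/2 = n := by omega
    rw [hn2]
    have step : ∀ k ∈ Finset.range (n + 1),
        ((2*n).choose (2*k) : ℝ) * E a (2*n - 2*k) * ((3:ℝ) ^ (2*k) + (-3) ^ (2*k))
        = 2 * (((2*n).choose (2*k) : ℝ) * 3 ^ (2*k) * E a (2*n - 2*k)) := by
      intro k _
      rw [Even.neg_pow ⟨k, by ring⟩ 3]
      ring
    rw [Finset.sum_congr rfl step, ← Finset.mul_sum]
    rw [Finset.sum_range_succ'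
      (fun k => (((2*n).choose (2*k) : ℝ) * 3 ^ (2*k) * E a (2*n - 2*k))) n]
    rw [← Icc_one_sum n
      (fun k => (((2*n).choose (2*k) : ℝ) * 3 ^ (2*k) * E a (2*n - 2*k)))]
    norm_num
  set S := ∑ k ∈ Finset.Icc 1 n, ((2 * n).choose (2 * k) : ℝ) * 3 ^ (2 * k) * E a (2 * n - 2 * k)
    with hS
  have hX : (PowerSeries.coeff (2*n)) (Eg a * csh 3)
      = 2 * (S + E a (2*n)) / ((2*n).factorial : ℝ) := by
    rw [eq_div_iff hF, mul_comm, hT, hSf]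
  rw [hX] at h3
  field_simp at h3
  have goal' : S * a^3 = 2^(2*n+1)*a^2 + 4*(a-1)*a - (3*a-2)^2 * E a (2*n) := by
    linear_combination ((1:ℝ)/2) * h3
  field_simp
  linear_combination goal'
end

section
/- For any nonzero real number a and any positive integer n, ∑_{k=1}^{n} C(2n,2k) 4^{2k} E_{2n-2k,a} = 2(3^{2n}-1)/a + 8(a-1)^2/a^3 + 2^{2n+2}(a-1)/a^2 - 8(a-1)^2(2a-1)/a^4 · E_{2n,a}. -/
open Finset

-- recurrence in closed sum form
lemma Erec (a : ℝ) (m : ℕ) (hm : 1 ≤ m) :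
    a * ∑ i ∈ Finset.range (m / 2 + 1), (m.choose (2 * i) : ℝ) * E a (m - 2 * i)
      = (a - 1) * E a m := by
  obtain ⟨n, rfl⟩ : ∃ n, m = n + 1 := ⟨m - 1, by omega⟩
  have hE : E a (n + 1) = -a * ∑ k ∈ Finset.Icc 1 ((n + 1) / 2),
      ((n + 1).choose (2 * k) : ℝ) * E a (n + 1 - 2 * k) := by
    rw [E]
    congr 1
    exact Finset.sum_attach (Finset.Icc 1 ((n + 1) / 2))
      (fun k => ((n + 1).choose (2 * k) : ℝ) * E a (n + 1 - 2 * k))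
  have hsplit : ∑ i ∈ Finset.range ((n + 1) / 2 + 1),
      ((n + 1).choose (2 * i) : ℝ) * E a (n + 1 - 2 * i)
      = E a (n + 1) + ∑ k ∈ Finset.Icc 1 ((n + 1) / 2),
        ((n + 1).choose (2 * k) : ℝ) * E a (n + 1 - 2 * k) := by
    rw [Finset.sum_range_succ' (fun i => ((n + 1).choose (2 * i) : ℝ) * E a (n + 1 - 2 * i))]
    rw [show Finset.Icc 1 ((n+1)/2) = Finset.Ico 1 ((n+1)/2 + 1) by rfl,
      Finset.sum_Ico_eq_sum_range]
    simp [add_comm]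
  rw [hsplit]
  nlinarith [hE]

lemma even_split (g : ℕ → ℝ) (m : ℕ) :
    ∑ i ∈ Finset.range (2 * m + 1), g i
      = ∑ k ∈ Finset.range (m + 1), g (2 * k) + ∑ k ∈ Finset.range m, g (2 * k + 1) := by
  induction m with
  | zero => simp
  | succ m ih =>
      rw [show 2 * (m + 1) + 1 = (2 * m + 1) + 1 + 1 by ring, Finset.sum_range_succ,
        Finset.sum_range_succ, ih]
      have e1 := Finset.sum_range_succ (fun k => g (2 * k)) (m + 1)
      have e2 := Finset.sum_range_succ (fun k => g (2 * k + 1)) m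
      rw [show 2 * m + 1 + 1 = 2 * (m + 1) by ring]
      linarith [e1, e2]

lemma binom_even (x : ℝ) (m : ℕ) :
    (x + 1) ^ (2 * m) + (x - 1) ^ (2 * m)
      = 2 * ∑ k ∈ Finset.range (m + 1), ((2 * m).choose (2 * k) : ℝ) * x ^ (2 * k) := by
  have h1 : (x + 1) ^ (2 * m) = ∑ i ∈ Finset.range (2 * m + 1),
      x ^ i * 1 ^ (2 * m - i) * ((2 * m).choose i : ℝ) := add_pow x 1 (2 * m)
  have h2 : (x - 1) ^ (2 * m) = ∑ i ∈ Finset.range (2 * m + 1),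
      x ^ i * (-1 : ℝ) ^ (2 * m - i) * ((2 * m).choose i : ℝ) := by
    have := add_pow x (-1 : ℝ) (2 * m)
    simpa [sub_eq_add_neg] using this
  rw [h1, h2, ← Finset.sum_add_distrib]
  rw [even_split (fun i => x ^ i * 1 ^ (2 * m - i) * ((2 * m).choose i : ℝ)
      + x ^ i * (-1 : ℝ) ^ (2 * m - i) * ((2 * m).choose i : ℝ)) m]
  have hodd : ∑ k ∈ Finset.range m, (x ^ (2 * k + 1) * 1 ^ (2 * m - (2 * k + 1)) * ((2 * m).choose (2 * k + 1) : ℝ)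
      + x ^ (2 * k + 1) * (-1 : ℝ) ^ (2 * m - (2 * k + 1)) * ((2 * m).choose (2 * k + 1) : ℝ)) = 0 := by
    apply Finset.sum_eq_zero
    intro k hk
    have hk' : k < m := Finset.mem_range.mp hk
    obtain ⟨j, hj⟩ : ∃ j, 2 * m - (2 * k + 1) = 2 * j + 1 := ⟨m - k - 1, by omega⟩
    rw [hj]
    have : (-1 : ℝ) ^ (2 * j + 1) = -1 := by
      rw [pow_succ, pow_mul]; simp
    rw [this]
    ring
  rw [hodd, add_zero, Finset.mul_sum]
  apply Finset.sum_congr rfl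
  intro k hk
  have hk' : k ≤ m := by have := Finset.mem_range.mp hk; omega
  have hj : 2 * m - 2 * k = 2 * (m - k) := by omega
  rw [hj, pow_mul, pow_mul]
  simp
  ring

noncomputable def G (a x : ℝ) (n : ℕ) : ℝ :=
  ∑ k ∈ Finset.range (n + 1), ((2 * n).choose (2 * k) : ℝ) * x ^ (2 * k) * E a (2 * n - 2 * k)

lemma key_s10 (a x : ℝ) (n : ℕ) (hn : 1 ≤ n) :
    (1 - a) * G a x n + a / 2 * (G a (x + 1) n + G a (x - 1) n) = x ^ (2 * n) := by
  have hsum : a / 2 * (G a (x + 1) n + G a (x - 1) n)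
      = ∑ j ∈ Finset.range (n + 1), ((2 * n).choose (2 * j) : ℝ) * x ^ (2 * j) *
          (a * ∑ i ∈ Finset.range (n - j + 1),
            ((2 * n - 2 * j).choose (2 * i) : ℝ) * E a (2 * n - 2 * j - 2 * i)) := by
    unfold G
    rw [← Finset.sum_add_distrib]
    have step1 : ∑ k ∈ Finset.range (n + 1),
        (((2 * n).choose (2 * k) : ℝ) * (x + 1) ^ (2 * k) * E a (2 * n - 2 * k)
          + ((2 * n).choose (2 * k) : ℝ) * (x - 1) ^ (2 * k) * E a (2 * n - 2 * k))
        = ∑ k ∈ Finset.range (n + 1), ∑ j ∈ Finset.range (k + 1),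
            2 * (((2 * n).choose (2 * k) : ℝ) * ((2 * k).choose (2 * j) : ℝ)
              * x ^ (2 * j) * E a (2 * n - 2 * k)) := by
      apply Finset.sum_congr rfl
      intro k _
      have hb := binom_even x k
      calc ((2 * n).choose (2 * k) : ℝ) * (x + 1) ^ (2 * k) * E a (2 * n - 2 * k)
            + ((2 * n).choose (2 * k) : ℝ) * (x - 1) ^ (2 * k) * E a (2 * n - 2 * k)
          = ((2 * n).choose (2 * k) : ℝ) * ((x + 1) ^ (2 * k) + (x - 1) ^ (2 * k))
              * E a (2 * n - 2 * k) := by ring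
        _ = 2 * (((2 * n).choose (2 * k) : ℝ)
              * (∑ j ∈ Finset.range (k + 1), ((2 * k).choose (2 * j) : ℝ) * x ^ (2 * j))
              * E a (2 * n - 2 * k)) := by rw [hb]; ring
        _ = ∑ j ∈ Finset.range (k + 1),
            2 * (((2 * n).choose (2 * k) : ℝ) * ((2 * k).choose (2 * j) : ℝ)
              * x ^ (2 * j) * E a (2 * n - 2 * k)) := by
          simp only [Finset.mul_sum, Finset.sum_mul]
          apply Finset.sum_congr rfl
          intros
          ring
    rw [step1]
    -- swap the double sum
    have swap : ∑ k ∈ Finset.range (n + 1), ∑ j ∈ Finset.range (k + 1),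
          2 * (((2 * n).choose (2 * k) : ℝ) * ((2 * k).choose (2 * j) : ℝ)
            * x ^ (2 * j) * E a (2 * n - 2 * k))
        = ∑ j ∈ Finset.range (n + 1), ∑ k ∈ Finset.Ico j (n + 1),
            2 * (((2 * n).choose (2 * k) : ℝ) * ((2 * k).choose (2 * j) : ℝ)
              * x ^ (2 * j) * E a (2 * n - 2 * k)) := by
      have := Finset.sum_Ico_Ico_comm 0 (n + 1) (fun j k =>
        2 * (((2 * n).choose (2 * k) : ℝ) * ((2 * k).choose (2 * j) : ℝ)
          * x ^ (2 * j) * E a (2 * n - 2 * k)))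
      simp only [Finset.range_eq_Ico]
      rw [← this]
    rw [swap, Finset.mul_sum]
    apply Finset.sum_congr rfl
    intro j hj
    have hjn : j ≤ n := by have := Finset.mem_range.mp hj; omega
    rw [Finset.sum_Ico_eq_sum_range]
    have hcard : n + 1 - j = n - j + 1 := by omega
    rw [hcard]
    simp only [Finset.mul_sum]
    apply Finset.sum_congr rfl
    intro i hi
    have hin : i ≤ n - j := by have := Finset.mem_range.mp hi; omega
    have hchoose : ((2 * n).choose (2 * (j + i)) : ℝ) * ((2 * (j + i)).choose (2 * j) : ℝ)
        = ((2 * n).choose (2 * j) : ℝ) * ((2 * n - 2 * j).choose (2 * i) : ℝ) := by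
      have h1 : 2 * (j + i) ≤ 2 * n := by omega
      have h2 : 2 * j ≤ 2 * (j + i) := by omega
      have := Nat.choose_mul (n := 2 * n) h2
      have harg : 2 * (j + i) - 2 * j = 2 * i := by omega
      rw [harg] at this
      exact_mod_cast congrArg (Nat.cast : ℕ → ℝ) this
    have hE : E a (2 * n - 2 * (j + i)) = E a (2 * n - 2 * j - 2 * i) := by
      congr 1
      omega
    rw [hE]
    linear_combination (x ^ (2 * j) * a * E a (2 * n - 2 * j - 2 * i)) * hchoose
  rw [hsum]
  -- split off the last term j = n
  rw [Finset.sum_range_succ]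
  have hlast : ((2 * n).choose (2 * n) : ℝ) * x ^ (2 * n) *
      (a * ∑ i ∈ Finset.range (n - n + 1),
        ((2 * n - 2 * n).choose (2 * i) : ℝ) * E a (2 * n - 2 * n - 2 * i))
      = a * x ^ (2 * n) := by
    have h0 : n - n = 0 := by omega
    have h00 : 2 * n - 2 * n = 0 := by omega
    rw [h0, h00]
    simp [E_zero, mul_comm]
  rw [hlast]
  have hmain : ∑ j ∈ Finset.range n, ((2 * n).choose (2 * j) : ℝ) * x ^ (2 * j) *
      (a * ∑ i ∈ Finset.range (n - j + 1),
        ((2 * n - 2 * j).choose (2 * i) : ℝ) * E a (2 * n - 2 * j - 2 * i))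
      = (a - 1) * ∑ j ∈ Finset.range n, ((2 * n).choose (2 * j) : ℝ) * x ^ (2 * j)
          * E a (2 * n - 2 * j) := by
    rw [Finset.mul_sum]
    apply Finset.sum_congr rfl
    intro j hj
    have hjn : j < n := Finset.mem_range.mp hj
    have hm : 1 ≤ 2 * n - 2 * j := by omega
    have hdiv : (2 * n - 2 * j) / 2 = n - j := by omega
    have := Erec a (2 * n - 2 * j) hm
    rw [hdiv] at this
    rw [this]
    ring
  rw [hmain]
  unfold G
  rw [Finset.sum_range_succ]
  have hlast2 : ((2 * n).choose (2 * n) : ℝ) * x ^ (2 * n) * E a (2 * n - 2 * n)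
      = x ^ (2 * n) := by
    have h00 : 2 * n - 2 * n = 0 := by omega
    rw [h00]
    simp [E_zero]
  rw [hlast2]
  ring

lemma G_zero (a : ℝ) (n : ℕ) (hn : 1 ≤ n) : G a 0 n = E a (2 * n) := by
  unfold G
  rw [Finset.sum_eq_single 0]
  · simp
  · intro k hk hk0
    have : (0 : ℝ) ^ (2 * k) = 0 := by
      apply zero_pow
      omega
    rw [this]
    ring
  · intro h
    simp at h

lemma G_neg_one (a : ℝ) (n : ℕ) : G a (-1) n = G a 1 n := by
  unfold G
  apply Finset.sum_congr rfl
  intro k _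
  rw [show ((-1 : ℝ)) ^ (2 * k) = 1 by rw [pow_mul]; simp, one_pow]

theorem stmt10 (a : ℝ) (ha : a ≠ 0) (n : ℕ) (hn : 1 ≤ n) :
    ∑ k ∈ Finset.Icc 1 n, ((2 * n).choose (2 * k) : ℝ) * 4 ^ (2 * k) * E a (2 * n - 2 * k) =
      2 * (3 ^ (2 * n) - 1) / a + 8 * (a - 1) ^ 2 / a ^ 3 + 2 ^ (2 * n + 2) * (a - 1) / a ^ 2 -
        8 * (a - 1) ^ 2 * (2 * a - 1) / a ^ 4 * E a (2 * n) := by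
  have e0 := key_s10 a 0 n hn
  have e1 := key_s10 a 1 n hn
  have e2 := key_s10 a 2 n hn
  have e3 := key_s10 a 3 n hn
  rw [show (0 : ℝ) + 1 = 1 by norm_num, show (0 : ℝ) - 1 = -1 by norm_num, G_neg_one,
    G_zero a n hn, show (0 : ℝ) ^ (2 * n) = 0 from zero_pow (by omega)] at e0
  rw [show (1 : ℝ) + 1 = 2 by norm_num, show (1 : ℝ) - 1 = 0 by norm_num,
    G_zero a n hn, one_pow] at e1
  rw [show (2 : ℝ) + 1 = 3 by norm_num, show (2 : ℝ) - 1 = 1 by norm_num] at e2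
  rw [show (3 : ℝ) + 1 = 4 by norm_num, show (3 : ℝ) - 1 = 2 by norm_num] at e3
  have hL : ∑ k ∈ Finset.Icc 1 n, ((2 * n).choose (2 * k) : ℝ) * 4 ^ (2 * k)
      * E a (2 * n - 2 * k) = G a 4 n - E a (2 * n) := by
    unfold G
    rw [Finset.sum_range_succ' (fun k => ((2 * n).choose (2 * k) : ℝ) * (4 : ℝ) ^ (2 * k)
      * E a (2 * n - 2 * k)) n]
    rw [show Finset.Icc 1 n = Finset.Ico 1 (n + 1) by rfl, Finset.sum_Ico_eq_sum_range]
    simp [add_comm]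
  rw [hL]
  have hkey : a ^ 4 * G a 4 n = a ^ 4 * E a (2 * n) + 2 * a ^ 3 * (3 ^ (2 * n) - 1)
      + 8 * a * (a - 1) ^ 2 + 2 ^ (2 * n + 2) * a ^ 2 * (a - 1)
      - 8 * (a - 1) ^ 2 * (2 * a - 1) * E a (2 * n) := by
    linear_combination (2 * a ^ 3) * e3 + (4 * a ^ 2 * (a - 1)) * e2
      + (a * (8 * (a - 1) ^ 2 - 2 * a ^ 2)) * e1
      + (-(a - 1) * (4 * a ^ 2 - 8 * (a - 1) ^ 2)) * e0
  field_simp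
  linear_combination hkey
end

section
/- For any nonzero real number a and any positive integer n, ∑_{k=1}^{n} C(2n,2k) 5^{2k} E_{2n-2k,a} = 2·4^{2n}/a + (3a^2-8a+4)·2^{2n+1}/a^3 + 4(a-1)·3^{2n}/a^2 + 8(a-1)(a^2-4a+2)/a^4 - ((5a^2-10a+4)^2/a^5) E_{2n,a}. -/
open Finset

lemma E_rec_s11 (a : ℝ) (m : ℕ) (hm : 1 ≤ m) :
    E a m = -a * ∑ k ∈ Icc 1 (m / 2), (m.choose (2 * k) : ℝ) * E a (m - 2 * k) := by
  obtain ⟨n, rfl⟩ : ∃ n, m = n + 1 := ⟨m - 1, by omega⟩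
  rw [E]
  congr 1
  exact Finset.sum_attach (Icc 1 ((n + 1) / 2)) (fun k => ((n + 1).choose (2 * k) : ℝ) * E a (n + 1 - 2 * k))

lemma E_odd_s11 (a : ℝ) (j : ℕ) : E a (2 * j + 1) = 0 := by
  induction j using Nat.strong_induction_on with
  | _ j ih =>
    rw [E_rec_s11 a (2 * j + 1) (by omega)]
    have h2 : (2 * j + 1) / 2 = j := by omega
    rw [h2, Finset.sum_eq_zero, mul_zero]
    intro k hk
    have hk' := Finset.mem_Icc.mp hk
    have h3 : 2 * j + 1 - 2 * k = 2 * (j - k) + 1 := by omega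
    rw [h3, ih (j - k) (by omega), mul_zero]

lemma sum_range_even (t : ℕ) (f : ℕ → ℝ) (hf : ∀ j, f (2 * j + 1) = 0) :
    ∑ k ∈ range (2 * t + 1), f k = ∑ j ∈ range (t + 1), f (2 * j) := by
  induction t with
  | zero => simp
  | succ t ih =>
    have h1 : 2 * (t + 1) + 1 = (2 * t + 1) + 1 + 1 := by ring
    rw [h1, Finset.sum_range_succ, Finset.sum_range_succ, ih, hf t,
      Finset.sum_range_succ (fun j => f (2 * j)) (t + 1)]
    have : 2 * t + 1 + 1 = 2 * (t + 1) := by ring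
    rw [this]
    ring

lemma T_even (a : ℝ) (ha : a ≠ 0) (t : ℕ) (ht : 1 ≤ t) :
    ∑ k ∈ range (2 * t + 1), ((2 * t).choose k : ℝ) * E a k = (1 - 1 / a) * E a (2 * t) := by
  rw [sum_range_even t _ (fun j => by rw [E_odd_s11, mul_zero])]
  have hrefl : ∑ j ∈ range (t + 1), ((2 * t).choose (2 * j) : ℝ) * E a (2 * j)
      = ∑ j ∈ range (t + 1), ((2 * t).choose (2 * j) : ℝ) * E a (2 * t - 2 * j) := by
    rw [← Finset.sum_range_reflect]
    apply Finset.sum_congr rfl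
    intro j hj
    have hj' : j ≤ t := Nat.lt_succ_iff.mp (mem_range.mp hj)
    have e1 : 2 * (t + 1 - 1 - j) = 2 * t - 2 * j := by omega
    rw [e1, Nat.choose_symm (by omega : 2 * j ≤ 2 * t)]
  rw [hrefl, Finset.sum_range_succ']
  have h0 : ((2 * t).choose (2 * 0) : ℝ) * E a (2 * t - 2 * 0) = E a (2 * t) := by simp
  rw [h0]
  have hrec := E_rec_s11 a (2 * t) (by omega)
  have hdiv : (2 * t) / 2 = t := by omega
  rw [hdiv] at hrec
  have hIcc : ∑ k ∈ Icc 1 t, ((2 * t).choose (2 * k) : ℝ) * E a (2 * t - 2 * k)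
      = ∑ i ∈ range t, ((2 * t).choose (2 * (i + 1)) : ℝ) * E a (2 * t - 2 * (i + 1)) := by
    rw [← Finset.Ico_add_one_right_eq_Icc, Finset.sum_Ico_eq_sum_range]
    simp only [Nat.add_sub_cancel]
    apply Finset.sum_congr rfl
    intro i _
    have : 1 + i = i + 1 := by omega
    rw [this]
  have hsum : ∑ i ∈ range t, ((2 * t).choose (2 * (i + 1)) : ℝ) * E a (2 * t - 2 * (i + 1))
      = -(E a (2 * t)) / a := by
    rw [← hIcc]
    field_simp at hrec ⊢
    linarith [hrec]
  rw [hsum]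
  field_simp
  ring

lemma inner_sumE (a : ℝ) (ha : a ≠ 0) (m : ℕ) :
    ∑ k ∈ range (m + 1), (m.choose k : ℝ) * E a k * (1 + (-1 : ℝ) ^ (m - k)) =
      if m = 0 then 2 else 2 * (1 - 1 / a) * E a m := by
  rcases Nat.even_or_odd m with ⟨t, ht⟩ | ⟨t, ht⟩
  · -- m = t + t
    have hm : m = 2 * t := by omega
    subst hm
    have step : ∀ k ∈ range (2 * t + 1),
        ((2 * t).choose k : ℝ) * E a k * (1 + (-1 : ℝ) ^ (2 * t - k))
          = 2 * (((2 * t).choose k : ℝ) * E a k) := by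
      intro k hk
      have hk' : k ≤ 2 * t := Nat.lt_succ_iff.mp (mem_range.mp hk)
      rcases Nat.even_or_odd k with ⟨s, hs⟩ | ⟨s, hs⟩
      · have : Even (2 * t - k) := ⟨t - s, by omega⟩
        rw [this.neg_one_pow]
        ring
      · have : k = 2 * s + 1 := by omega
        rw [this, E_odd_s11]
        ring
    rw [Finset.sum_congr rfl step]
    rcases Nat.eq_zero_or_pos t with rfl | htpos
    · simp [E_zero]
    · rw [← Finset.mul_sum, T_even a ha t htpos]
      have : 2 * t ≠ 0 := by omega
      rw [if_neg this]
      ring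
  · -- m = 2 t + 1
    have hm : m = 2 * t + 1 := by omega
    subst hm
    rw [if_neg (by omega), E_odd_s11, mul_zero]
    apply Finset.sum_eq_zero
    intro k hk
    have hk' : k ≤ 2 * t + 1 := Nat.lt_succ_iff.mp (mem_range.mp hk)
    rcases Nat.even_or_odd k with ⟨s, hs⟩ | ⟨s, hs⟩
    · have : Odd (2 * t + 1 - k) := ⟨t - s, by omega⟩
      rw [this.neg_one_pow]
      ring
    · have : k = 2 * s + 1 := by omega
      rw [this, E_odd_s11]
      ring

lemma EP_rec (a : ℝ) (ha : a ≠ 0) (n : ℕ) (hn : 1 ≤ n) (x : ℝ) :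
    EP a n (x + 1) + EP a n (x - 1)
      = 2 * (1 - 1 / a) * EP a n x + (2 / a) * x ^ n := by
  unfold EP
  rw [← Finset.sum_add_distrib]
  have key : ∀ k ∈ range (n + 1),
      (n.choose k : ℝ) * E a k * (x + 1) ^ (n - k) + (n.choose k : ℝ) * E a k * (x - 1) ^ (n - k)
        = ∑ i ∈ range (n + 1 - k),
            (n.choose k : ℝ) * ((n - k).choose i : ℝ) * E a k * (1 + (-1 : ℝ) ^ i) * x ^ (n - k - i) := by
    intro k hk
    have hk' : k ≤ n := Nat.lt_succ_iff.mp (mem_range.mp hk)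
    have hadd : (x + 1) ^ (n - k)
        = ∑ i ∈ range (n - k + 1), x ^ i * (1 : ℝ) ^ (n - k - i) * ((n - k).choose i : ℝ) :=
      add_pow x 1 (n - k)
    have hsub : (x - 1) ^ (n - k)
        = ∑ i ∈ range (n - k + 1), x ^ i * (-1 : ℝ) ^ (n - k - i) * ((n - k).choose i : ℝ) := by
      rw [sub_eq_add_neg]
      exact add_pow x (-1) (n - k)
    rw [hadd, hsub, Finset.mul_sum, Finset.mul_sum, ← Finset.sum_add_distrib,
      show n + 1 - k = n - k + 1 from by omega,
      ← Finset.sum_range_reflect (fun i =>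
        (n.choose k : ℝ) * ((n - k).choose i : ℝ) * E a k * (1 + (-1 : ℝ) ^ i) * x ^ (n - k - i))
        (n - k + 1)]
    apply Finset.sum_congr rfl
    intro i hi
    have hi' : i ≤ n - k := Nat.lt_succ_iff.mp (mem_range.mp hi)
    rw [show n - k + 1 - 1 - i = n - k - i from by omega,
      Nat.choose_symm (by omega : i ≤ n - k),
      show n - k - (n - k - i) = i from by omega]
    ring
  rw [Finset.sum_congr rfl key]
  -- triangle swap
  have tri : ∑ k ∈ range (n + 1), ∑ i ∈ range (n + 1 - k),
        (n.choose k : ℝ) * ((n - k).choose i : ℝ) * E a k * (1 + (-1 : ℝ) ^ i) * x ^ (n - k - i)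
      = ∑ m ∈ range (n + 1), ∑ k ∈ range (m + 1),
        (n.choose k : ℝ) * ((n - k).choose (m - k) : ℝ) * E a k * (1 + (-1 : ℝ) ^ (m - k)) * x ^ (n - k - (m - k)) := by
    have h1 : ∀ k ∈ range (n + 1), ∑ i ∈ range (n + 1 - k),
          (n.choose k : ℝ) * ((n - k).choose i : ℝ) * E a k * (1 + (-1 : ℝ) ^ i) * x ^ (n - k - i)
        = ∑ m ∈ Ico k (n + 1),
          (n.choose k : ℝ) * ((n - k).choose (m - k) : ℝ) * E a k * (1 + (-1 : ℝ) ^ (m - k)) * x ^ (n - k - (m - k)) := by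
      intro k hk
      rw [Finset.sum_Ico_eq_sum_range]
      apply Finset.sum_congr rfl
      intro i _
      rw [show k + i - k = i from by omega]
    rw [Finset.sum_congr rfl h1]
    simp_rw [Finset.range_eq_Ico]
    exact Finset.sum_Ico_Ico_comm 0 (n + 1) _
  rw [tri]
  have key2 : ∀ m ∈ range (n + 1),
      ∑ k ∈ range (m + 1),
          (n.choose k : ℝ) * ((n - k).choose (m - k) : ℝ) * E a k * (1 + (-1 : ℝ) ^ (m - k)) * x ^ (n - k - (m - k))
        = (n.choose m : ℝ) * x ^ (n - m) * (if m = 0 then 2 else 2 * (1 - 1 / a) * E a m) := by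
    intro m hm
    have hm' : m ≤ n := Nat.lt_succ_iff.mp (mem_range.mp hm)
    have h2 : ∀ k ∈ range (m + 1),
        (n.choose k : ℝ) * ((n - k).choose (m - k) : ℝ) * E a k * (1 + (-1 : ℝ) ^ (m - k)) * x ^ (n - k - (m - k))
          = (n.choose m : ℝ) * x ^ (n - m) * ((m.choose k : ℝ) * E a k * (1 + (-1 : ℝ) ^ (m - k))) := by
      intro k hk
      have hk' : k ≤ m := Nat.lt_succ_iff.mp (mem_range.mp hk)
      have hc : (n.choose k : ℝ) * ((n - k).choose (m - k) : ℝ) = (n.choose m : ℝ) * (m.choose k : ℝ) := by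
        rw [← Nat.cast_mul, ← Nat.cast_mul, (Nat.choose_mul (n := n) hk').symm]
      have he : n - k - (m - k) = n - m := by omega
      rw [he, show (n.choose k : ℝ) * ((n - k).choose (m - k) : ℝ) * E a k * (1 + (-1 : ℝ) ^ (m - k)) * x ^ (n - m)
          = ((n.choose k : ℝ) * ((n - k).choose (m - k) : ℝ)) * (E a k * (1 + (-1 : ℝ) ^ (m - k)) * x ^ (n - m)) from by ring,
        hc]
      ring
    rw [Finset.sum_congr rfl h2, ← Finset.mul_sum, inner_sumE a ha m]
  rw [Finset.sum_congr rfl key2, Finset.sum_range_succ',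
    Finset.sum_range_succ' (fun k => (n.choose k : ℝ) * E a k * x ^ (n - k)) n]
  simp only [Nat.succ_ne_zero, if_false, if_pos rfl, Nat.choose_zero_right, Nat.cast_one,
    Nat.sub_zero, E_zero]
  have hsc : ∀ i ∈ range n,
      (n.choose (i + 1) : ℝ) * x ^ (n - (i + 1)) * (2 * (1 - 1 / a) * E a (i + 1))
        = 2 * (1 - 1 / a) * ((n.choose (i + 1) : ℝ) * E a (i + 1) * x ^ (n - (i + 1))) := by
    intro i _
    ring
  rw [Finset.sum_congr rfl hsc, ← Finset.mul_sum, Finset.mul_sum, ← Finset.mul_sum]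
  field_simp
  simp only [if_true]
  ring_nf
  simp only [mul_comm, mul_left_comm, mul_assoc]

lemma EP_zero (a : ℝ) (n : ℕ) : EP a n 0 = E a n := by
  unfold EP
  rw [Finset.sum_eq_single n]
  · simp
  · intro k hk hne
    have : n - k ≠ 0 := by
      have := Nat.lt_succ_iff.mp (mem_range.mp hk)
      omega
    rw [zero_pow this, mul_zero]
  · intro h
    exact absurd (Finset.self_mem_range_succ n) h

lemma EP_neg (a : ℝ) (n : ℕ) (x : ℝ) : EP a (2 * n) (-x) = EP a (2 * n) x := by
  unfold EP
  apply Finset.sum_congr rfl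
  intro k hk
  have hk' : k ≤ 2 * n := Nat.lt_succ_iff.mp (mem_range.mp hk)
  rcases Nat.even_or_odd k with ⟨s, hs⟩ | ⟨s, hs⟩
  · have : Even (2 * n - k) := ⟨n - s, by omega⟩
    rw [this.neg_pow]
  · rw [show k = 2 * s + 1 from by omega, E_odd_s11, mul_zero, zero_mul, zero_mul]

theorem stmt11 (a : ℝ) (ha : a ≠ 0) (n : ℕ) (hn : 1 ≤ n) :
    ∑ k ∈ Finset.Icc 1 n, ((2 * n).choose (2 * k) : ℝ) * 5 ^ (2 * k) * E a (2 * n - 2 * k) =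
      2 * 4 ^ (2 * n) / a + (3 * a ^ 2 - 8 * a + 4) * 2 ^ (2 * n + 1) / a ^ 3 +
        4 * (a - 1) * 3 ^ (2 * n) / a ^ 2 + 8 * (a - 1) * (a ^ 2 - 4 * a + 2) / a ^ 4 -
        (5 * a ^ 2 - 10 * a + 4) ^ 2 / a ^ 5 * E a (2 * n) := by
  have hL : ∑ k ∈ Finset.Icc 1 n, ((2 * n).choose (2 * k) : ℝ) * 5 ^ (2 * k) * E a (2 * n - 2 * k)
      = EP a (2 * n) 5 - E a (2 * n) := by
    have e1 : EP a (2 * n) 5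
        = ∑ j ∈ range (n + 1), ((2 * n).choose (2 * j) : ℝ) * E a (2 * j) * 5 ^ (2 * n - 2 * j) := by
      unfold EP
      exact sum_range_even n _ (fun j => by rw [E_odd_s11, mul_zero, zero_mul])
    have e2 : ∑ j ∈ range (n + 1), ((2 * n).choose (2 * j) : ℝ) * E a (2 * j) * 5 ^ (2 * n - 2 * j)
        = ∑ j ∈ range (n + 1), ((2 * n).choose (2 * j) : ℝ) * 5 ^ (2 * j) * E a (2 * n - 2 * j) := by
      rw [← Finset.sum_range_reflect]
      apply Finset.sum_congr rfl
      intro j hj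
      have hj' : j ≤ n := Nat.lt_succ_iff.mp (mem_range.mp hj)
      rw [show 2 * (n + 1 - 1 - j) = 2 * n - 2 * j from by omega,
        Nat.choose_symm (by omega : 2 * j ≤ 2 * n),
        show 2 * n - (2 * n - 2 * j) = 2 * j from by omega]
      ring
    have e3 : ∑ j ∈ range (n + 1), ((2 * n).choose (2 * j) : ℝ) * 5 ^ (2 * j) * E a (2 * n - 2 * j)
        = E a (2 * n) + ∑ k ∈ Finset.Icc 1 n, ((2 * n).choose (2 * k) : ℝ) * 5 ^ (2 * k) * E a (2 * n - 2 * k) := by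
      rw [Finset.sum_range_succ']
      have h0 : ((2 * n).choose (2 * 0) : ℝ) * 5 ^ (2 * 0) * E a (2 * n - 2 * 0) = E a (2 * n) := by
        simp
      rw [h0]
      have hIcc : ∑ k ∈ Finset.Icc 1 n, ((2 * n).choose (2 * k) : ℝ) * 5 ^ (2 * k) * E a (2 * n - 2 * k)
          = ∑ i ∈ range n, ((2 * n).choose (2 * (i + 1)) : ℝ) * 5 ^ (2 * (i + 1)) * E a (2 * n - 2 * (i + 1)) := by
        rw [← Finset.Ico_add_one_right_eq_Icc, Finset.sum_Ico_eq_sum_range]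
        simp only [Nat.add_sub_cancel]
        apply Finset.sum_congr rfl
        intro i _
        have : 1 + i = i + 1 := by omega
        rw [this]
      rw [hIcc]
      ring
    rw [e1, e2, e3]
    ring
  rw [hL]
  have hrec := EP_rec a ha (2 * n) (by omega)
  have hP0 : EP a (2 * n) 0 = E a (2 * n) := EP_zero a (2 * n)
  have h1 : EP a (2 * n) 1 = (1 - 1 / a) * E a (2 * n) := by
    have h := hrec 0
    norm_num at h
    rw [EP_neg a n 1, hP0, zero_pow (by omega : 2 * n ≠ 0)] at h
    linear_combination h / 2
  have h2 : EP a (2 * n) 2 = 2 * (1 - 1 / a) * EP a (2 * n) 1 - EP a (2 * n) 0 + 2 / a := by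
    have h := hrec 1
    norm_num at h
    linear_combination h
  have h3 : EP a (2 * n) 3 = 2 * (1 - 1 / a) * EP a (2 * n) 2 - EP a (2 * n) 1
      + (2 / a) * 2 ^ (2 * n) := by
    have h := hrec 2
    norm_num at h
    linear_combination h
  have h4 : EP a (2 * n) 4 = 2 * (1 - 1 / a) * EP a (2 * n) 3 - EP a (2 * n) 2
      + (2 / a) * 3 ^ (2 * n) := by
    have h := hrec 3
    norm_num at h
    linear_combination h
  have h5 : EP a (2 * n) 5 = 2 * (1 - 1 / a) * EP a (2 * n) 4 - EP a (2 * n) 3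
      + (2 / a) * 4 ^ (2 * n) := by
    have h := hrec 4
    norm_num at h
    linear_combination h
  rw [h5, h4, h3, h2, h1, hP0]
  field_simp
  ring
end
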